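/- Let f, g ∈ ℤ[t] be monic polynomials of positive degree. Then |Res(f,g)| = 1 if and only if the ideal generated by f and g in ℤ[t] is the whole ring ℤ[t]. -/

import Mathlib

/-- The Sylvester-type matrix `A(f,g)` of two integer polynomials: its first
`deg g` columns contain the coefficients of `f, tf, ..., t^{deg g - 1} f` and its last
`deg f` columns contain the coefficients of `g, tg, ..., t^{deg f - 1} g`,
all expressed in the basis `1, t, ..., t^{deg f + deg g - 1}`. -/
noncomputable def sylvesterMatrix (f g : Polynomial ℤ) :
    Matrix (Fin (f.natDegree + g.natDegree)) (Fin (f.natDegree + g.natDegree)) ℤ :=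
  Matrix.of fun i j =>
    if (j : ℕ) < g.natDegree then (Polynomial.X ^ (j : ℕ) * f).coeff (i : ℕ)
    else (Polynomial.X ^ ((j : ℕ) - g.natDegree) * g).coeff (i : ℕ)

/-- The resultant `Res(f,g)` of two integer polynomials, as the determinant of the
Sylvester matrix. -/
noncomputable def res (f g : Polynomial ℤ) : ℤ := (sylvesterMatrix f g).det

open Polynomial Finset in
private lemma coeff_sum_CXpow {n : ℕ} (s : Finset (Fin n)) (c : Fin n → ℤ) (e : Fin n → ℕ)
    (k : ℕ) :
    (∑ j ∈ s, C (c j) * X ^ (e j)).coeff k = ∑ j ∈ s, if e j = k then c j else 0 := by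
  rw [finset_sum_coeff]
  refine Finset.sum_congr rfl fun j _ => ?_
  rw [coeff_C_mul, coeff_X_pow]
  by_cases hjk : e j = k
  · simp [hjk]
  · simp [hjk, Ne.symm hjk]

open Polynomial Finset in
private lemma degree_sum_CXpow_lt {n : ℕ} (s : Finset (Fin n)) (c : Fin n → ℤ)
    (e : Fin n → ℕ) (m : ℕ) (hm : 0 < m) (he : ∀ j ∈ s, e j < m) :
    (∑ j ∈ s, C (c j) * X ^ (e j)).degree < (m : WithBot ℕ) := by
  refine lt_of_le_of_lt (degree_sum_le _ _) ?_
  rw [Finset.sup_lt_iff (by exact_mod_cast WithBot.bot_lt_coe m)]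
  intro j hj
  exact lt_of_le_of_lt (degree_C_mul_X_pow_le _ _) (by exact_mod_cast he j hj)

open Polynomial Finset in
private noncomputable def apoly (f g : Polynomial ℤ)
    (v : Fin (f.natDegree + g.natDegree) → ℤ) : Polynomial ℤ :=
  ∑ j ∈ Finset.univ.filter (fun j : Fin (f.natDegree + g.natDegree) => (j : ℕ) < g.natDegree),
    C (v j) * X ^ (j : ℕ)

open Polynomial Finset in
private noncomputable def bpoly (f g : Polynomial ℤ)
    (v : Fin (f.natDegree + g.natDegree) → ℤ) : Polynomial ℤ :=
  ∑ j ∈ Finset.univ.filter (fun j : Fin (f.natDegree + g.natDegree) => ¬ (j : ℕ) < g.natDegree),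
    C (v j) * X ^ ((j : ℕ) - g.natDegree)

open Polynomial Finset in
private lemma mulVec_eq (f g : Polynomial ℤ) (v : Fin (f.natDegree + g.natDegree) → ℤ)
    (i : Fin (f.natDegree + g.natDegree)) :
    (sylvesterMatrix f g).mulVec v i = (apoly f g v * f + bpoly f g v * g).coeff (i : ℕ) := by
  have h0 : (sylvesterMatrix f g).mulVec v i =
      ∑ j : Fin (f.natDegree + g.natDegree), sylvesterMatrix f g i j * v j := rfl
  rw [h0, coeff_add, apoly, bpoly, Finset.sum_mul, Finset.sum_mul, finset_sum_coeff,
    finset_sum_coeff, ← Finset.sum_filter_add_sum_filter_not Finset.univ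
      (fun j : Fin (f.natDegree + g.natDegree) => (j : ℕ) < g.natDegree)
      (fun j => sylvesterMatrix f g i j * v j)]
  congr 1
  · refine Finset.sum_congr rfl fun j hj => ?_
    rw [Finset.mem_filter] at hj
    simp only [sylvesterMatrix, Matrix.of_apply, if_pos hj.2]
    rw [mul_assoc, coeff_C_mul, mul_comm]
  · refine Finset.sum_congr rfl fun j hj => ?_
    rw [Finset.mem_filter] at hj
    simp only [sylvesterMatrix, Matrix.of_apply, if_neg hj.2]
    rw [mul_assoc, coeff_C_mul, mul_comm]

/-- Lemma 4.3 (c): for monic integer polynomials `f, g` of positive degree,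
`|Res(f,g)| = 1` if and only if the ideal `(f,g)` is all of `ℤ[t]`. -/
theorem resultant_natAbs_eq_one_iff (f g : Polynomial ℤ) (hf : f.Monic) (hg : g.Monic)
    (hdf : 0 < f.natDegree) (hdg : 0 < g.natDegree) :
    (res f g).natAbs = 1 ↔ Ideal.span {f, g} = (⊤ : Ideal (Polynomial ℤ)) := by
  classical
  open Polynomial Finset in
  set df := f.natDegree with hdf'
  set dg := g.natDegree with hdg'
  have hn : 0 < df + dg := Nat.add_pos_left hdf _
  have hfdeg : f.degree = (df : WithBot ℕ) := degree_eq_natDegree hf.ne_zero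
  have hgdeg : g.degree = (dg : WithBot ℕ) := degree_eq_natDegree hg.ne_zero
  -- degree bound for combinations
  have hcomb : ∀ v : Fin (df + dg) → ℤ,
      (apoly f g v * f + bpoly f g v * g).degree < ((df + dg : ℕ) : WithBot ℕ) := by
    intro v
    refine lt_of_le_of_lt (degree_add_le _ _) (max_lt ?_ ?_)
    · refine lt_of_le_of_lt (degree_mul_le _ _) ?_
      have h1 : (apoly f g v).degree < (dg : WithBot ℕ) :=
        degree_sum_CXpow_lt _ _ _ _ hdg (fun j hj => (Finset.mem_filter.mp hj).2)
      calc (apoly f g v).degree + f.degree < (dg : WithBot ℕ) + (df : WithBot ℕ) := by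
            rw [hfdeg]
            exact WithBot.add_lt_add_right (by exact_mod_cast WithBot.coe_ne_bot) h1
        _ = ((df + dg : ℕ) : WithBot ℕ) := by push_cast; ring
    · refine lt_of_le_of_lt (degree_mul_le _ _) ?_
      have h1 : (bpoly f g v).degree < (df : WithBot ℕ) := by
        refine degree_sum_CXpow_lt _ _ _ _ hdf (fun j hj => ?_)
        have := j.isLt
        have := (Finset.mem_filter.mp hj).2
        omega
      calc (bpoly f g v).degree + g.degree < (df : WithBot ℕ) + (dg : WithBot ℕ) := by
            rw [hgdeg]
            exact WithBot.add_lt_add_right (by exact_mod_cast WithBot.coe_ne_bot) h1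
        _ = ((df + dg : ℕ) : WithBot ℕ) := by push_cast; ring
  rw [← Int.isUnit_iff_natAbs_eq, res, ← Matrix.isUnit_iff_isUnit_det,
    ← Matrix.mulVec_surjective_iff_isUnit]
  constructor
  · intro hsurj
    obtain ⟨v, hv⟩ := hsurj (fun i => if (i : ℕ) = 0 then 1 else 0)
    rw [Ideal.eq_top_iff_one, Ideal.mem_span_pair]
    refine ⟨apoly f g v, bpoly f g v, ?_⟩
    ext k
    by_cases hk : k < df + dg
    · have := congrFun hv ⟨k, hk⟩
      rw [mulVec_eq] at this
      simp only [coeff_one]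
      simpa using this
    · rw [coeff_eq_zero_of_degree_lt (lt_of_lt_of_le (hcomb v) (by exact_mod_cast le_of_not_gt hk)),
        coeff_one, if_neg (by omega)]
  · intro htop w
    obtain ⟨a, b, hab⟩ := Ideal.mem_span_pair.mp (htop ▸ Submodule.mem_top :
      (1 : Polynomial ℤ) ∈ Ideal.span {f, g})
    set h : Polynomial ℤ := ∑ j : Fin (df + dg), C (w j) * X ^ (j : ℕ) with hh
    have hhdeg : h.degree < ((df + dg : ℕ) : WithBot ℕ) :=
      degree_sum_CXpow_lt _ _ _ _ hn (fun j _ => j.isLt)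
    set a₀ : Polynomial ℤ := (h * a) %ₘ g with ha₀
    set b₀ : Polynomial ℤ := ((h * a) /ₘ g) * f + h * b with hb₀
    have key : a₀ * f + b₀ * g = h := by
      have h1 := Polynomial.modByMonic_add_div (h * a) g
      calc a₀ * f + b₀ * g = ((h * a) %ₘ g + g * ((h * a) /ₘ g)) * f + (h * b) * g := by
            rw [ha₀, hb₀]; ring
        _ = h * (a * f + b * g) := by rw [h1]; ring
        _ = h := by rw [hab, mul_one]
    have ha₀deg : a₀.degree < (dg : WithBot ℕ) := hgdeg ▸ degree_modByMonic_lt _ hg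
    have hb₀deg : b₀.degree < (df : WithBot ℕ) := by
      by_cases hb0 : b₀ = 0
      · rw [hb0, degree_zero]; exact_mod_cast WithBot.bot_lt_coe df
      have hbg : (b₀ * g).degree < ((df + dg : ℕ) : WithBot ℕ) := by
        have : b₀ * g = h - a₀ * f := by rw [← key]; ring
        rw [this]
        refine lt_of_le_of_lt (degree_sub_le _ _) (max_lt hhdeg ?_)
        refine lt_of_le_of_lt (degree_mul_le _ _) ?_
        calc a₀.degree + f.degree < (dg : WithBot ℕ) + (df : WithBot ℕ) := by
              rw [hfdeg]
              exact WithBot.add_lt_add_right (by exact_mod_cast WithBot.coe_ne_bot) ha₀deg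
          _ = ((df + dg : ℕ) : WithBot ℕ) := by push_cast; ring
      have hbg0 : b₀ * g ≠ 0 := mul_ne_zero hb0 hg.ne_zero
      rw [← natDegree_lt_iff_degree_lt hb0]
      have h2 : (b₀ * g).natDegree < df + dg := by
        rwa [natDegree_lt_iff_degree_lt hbg0]
      rw [natDegree_mul hb0 hg.ne_zero] at h2
      omega
    set v : Fin (df + dg) → ℤ := fun j =>
      if (j : ℕ) < dg then a₀.coeff (j : ℕ) else b₀.coeff ((j : ℕ) - dg) with hv
    have hap : apoly f g v = a₀ := by
      ext k
      rw [apoly, coeff_sum_CXpow]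
      by_cases hk : k < dg
      · have hkn : k < df + dg := by omega
        rw [Finset.sum_eq_single (⟨k, hkn⟩ : Fin (df + dg))]
        · simp [hv, hk]
        · intro j _ hj
          rw [if_neg]
          intro hjk
          exact hj (Fin.ext hjk)
        · intro habs
          simp at habs
          omega
      · rw [Finset.sum_eq_zero, coeff_eq_zero_of_degree_lt]
        · exact lt_of_lt_of_le ha₀deg (by exact_mod_cast le_of_not_gt hk)
        · intro j hj
          have := (Finset.mem_filter.mp hj).2
          rw [if_neg (by omega)]
    have hbp : bpoly f g v = b₀ := by
      ext k
      rw [bpoly, coeff_sum_CXpow]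
      by_cases hk : k < df
      · have hkn : dg + k < df + dg := by omega
        rw [Finset.sum_eq_single (⟨dg + k, hkn⟩ : Fin (df + dg))]
        · simp [hv, hdg']
        · intro j hj hjne
          have hjd := (Finset.mem_filter.mp hj).2
          rw [if_neg]
          intro hjk
          apply hjne
          apply Fin.ext
          show (j : ℕ) = dg + k
          omega
        · intro habs
          simp at habs
          omega
      · rw [Finset.sum_eq_zero, coeff_eq_zero_of_degree_lt]
        · exact lt_of_lt_of_le hb₀deg (by exact_mod_cast le_of_not_gt hk)
        · intro j hj
          have hjd := (Finset.mem_filter.mp hj).2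
          have := j.isLt
          rw [if_neg (by omega)]
    refine ⟨v, funext fun i => ?_⟩
    rw [mulVec_eq, hap, hbp, key]
    rw [hh, coeff_sum_CXpow, Finset.sum_eq_single i]
    · simp
    · intro j _ hj
      rw [if_neg (fun hjk => hj (Fin.ext hjk))]
    · simp
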